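/- arXiv:1212.5302 — 5 statements merged into one kernel-verified Lean document; each statement's English description precedes it below -/
import Mathlib

section
/- Let (A1,B1,C1,D1) and (A2,B2,C2,D2) be Speh quadruples, and let m1 = m(A1,B1,C1,D1) and m2 = m(A2,B2,C2,D2) be the associated rectangular multisegments. Then there exist a segment Δ1 occurring in m1 and a segment Δ2 occurring in m2 that are juxtaposed (i.e. Δ1 ∩ Δ2 = ∅ and Δ1 ∪ Δ2 is an integer segment) if and only if Finset.Icc A1 C1 ∩ Finset.Icc (B2+1) (D2+1) ≠ ∅ or Finset.Icc (B1+1) (D1+1) ∩ Finset.Icc A2 C2 ≠ ∅. -/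
/-- A Speh quadruple: integers `A ≤ B`, `A ≤ C` with `A + D = B + C`. -/
def SpehQuad (A B C D : ℤ) : Prop := A ≤ B ∧ A ≤ C ∧ A + D = B + C

/-- The integer segment (as a finite set) associated to a pair `(b, e)`. -/
noncomputable def segSet (s : ℤ × ℤ) : Finset ℤ := Finset.Icc s.1 s.2

/-- A finite set of integers is a ℤ-segment if it equals `Finset.Icc x y` for some `x ≤ y`. -/
def IsZSegment (S : Finset ℤ) : Prop := ∃ x y : ℤ, x ≤ y ∧ S = Finset.Icc x y

/-- The rectangular multisegment `m(A,B,C,D)`: the segments `[A+j, B+j]` for `j = 0, …, C−A`.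
(Here `D = B + C − A` is determined by the other three entries.) -/
def rectMulti (A B C : ℤ) : Multiset (ℤ × ℤ) :=
  (Multiset.range (C - A + 1).toNat).map fun j => (A + (j : ℤ), B + (j : ℤ))

/-- A multiset of pairs represents a multisegment when each pair `(b,e)` satisfies `b ≤ e`. -/
def ValidMS (a : Multiset (ℤ × ℤ)) : Prop := ∀ s ∈ a, s.1 ≤ s.2

/-- Total number of points of a multisegment (used as fuel for the MW algorithm). -/
def msSize (a : Multiset (ℤ × ℤ)) : ℕ := (a.map fun s => (s.2 + 1 - s.1).toNat).sum

/-- Removing the last element of a segment: `[b,e] ↦ [b,e−1]`, omitted if empty. -/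
def truncate (s : ℤ × ℤ) : Multiset (ℤ × ℤ) :=
  if s.1 ≤ s.2 - 1 then {(s.1, s.2 - 1)} else 0

/-- Maximum of a multiset of integers (default `0` on the empty multiset). -/
def msMaxD (m : Multiset ℤ) : ℤ := WithBot.unbotD 0 m.toFinset.max

/-- The chain of stages of one step of the Mœglin–Waldspurger algorithm.
`chainAux fuel rem b e` looks in `rem` for a segment with end `e` and beginning `< b`,
of maximal beginning; if found, it is removed, its truncation is recorded, and the chain
continues with end `e − 1`.  Returns the number of segments chosen together with the
resulting multisegment (remaining segments plus truncations of chosen ones). -/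
def chainAux : ℕ → Multiset (ℤ × ℤ) → ℤ → ℤ → ℕ × Multiset (ℤ × ℤ)
  | 0, rem, _, _ => (0, rem)
  | n + 1, rem, b, e =>
    let S := rem.filter fun s => s.2 = e ∧ s.1 < b
    if S = 0 then (0, rem)
    else
      let b' := msMaxD (S.map Prod.fst)
      let r := chainAux n (rem.erase (b', e)) b' (e - 1)
      (r.1 + 1, truncate (b', e) + r.2)

/-- One step of the Mœglin–Waldspurger algorithm on a (nonempty) multisegment:
returns the segment `Γ = [x−k+1, x]` and the multisegment `a′`. -/
def mwaStep (a : Multiset (ℤ × ℤ)) : (ℤ × ℤ) × Multiset (ℤ × ℤ) :=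
  let x := msMaxD (a.map Prod.snd)
  let b1 := msMaxD ((a.filter fun s => s.2 = x).map Prod.fst)
  let r := chainAux a.card (a.erase (b1, x)) b1 (x - 1)
  ((x - r.1, x), truncate (b1, x) + r.2)

/-- The Mœglin–Waldspurger algorithm, with fuel. -/
def mwaAux : ℕ → Multiset (ℤ × ℤ) → Multiset (ℤ × ℤ)
  | 0, _ => 0
  | n + 1, a =>
    if a = 0 then 0
    else
      let r := mwaStep a
      r.1 ::ₘ mwaAux n r.2

/-- The Mœglin–Waldspurger algorithm, computing the Zelevinsky dual of a multisegment.
(The fuel `msSize a` suffices: each step strictly decreases the total number of points.) -/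
def MWA (a : Multiset (ℤ × ℤ)) : Multiset (ℤ × ℤ) := mwaAux (msSize a) a

/-- Two segments are linked if their union is a ℤ-segment different from both of them. -/
def Linked (s t : ℤ × ℤ) : Prop :=
  IsZSegment (segSet s ∪ segSet t) ∧ segSet s ∪ segSet t ≠ segSet s ∧
    segSet s ∪ segSet t ≠ segSet t

/-- The intersection of two linked segments, as a multisegment (empty if disjoint). -/
def segInterM (s t : ℤ × ℤ) : Multiset (ℤ × ℤ) :=
  if max s.1 t.1 ≤ min s.2 t.2 then {(max s.1 t.1, min s.2 t.2)} else 0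

/-- Elementary linking operation: `Prec c b` holds when `b` contains linked segments
`s, t` and `c` is obtained from `b` by replacing them with `s ∪ t` (and `s ∩ t` if nonempty). -/
def Prec (c b : Multiset (ℤ × ℤ)) : Prop :=
  ∃ s t rest, b = s ::ₘ t ::ₘ rest ∧ Linked s t ∧
    c = (min s.1 t.1, max s.2 t.2) ::ₘ (segInterM s t + rest)

/-- The linking (strict) order on multisegments. -/
def MLt : Multiset (ℤ × ℤ) → Multiset (ℤ × ℤ) → Prop := Relation.TransGen Prec

/-- Strong ordering of Speh quadruples. -/
def StrongLt (A1 B1 C1 D1 A2 B2 C2 D2 : ℤ) : Prop :=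
  A1 < A2 ∧ B1 < B2 ∧ C1 < C2 ∧ D1 < D2

/-- The set `I(A,B,C,D)` attached to a Speh quadruple. -/
def ISet (A B C D : ℤ) : Set ℤ := {z : ℤ | z ≤ A - 1} ∪ ↑(Finset.Icc (B + 1) (D + 1))

/-- Pattern: integers `i < j < k` with `i, k ∈ I \ J` and `j ∈ J \ I`. -/
def PPat (I J : Set ℤ) : Prop :=
  ∃ i j k : ℤ, i < j ∧ j < k ∧ i ∈ I \ J ∧ j ∈ J \ I ∧ k ∈ I \ J

/-- Reflection of a multisegment: `[b,e] ↦ [−e,−b]`. -/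
def reflMS (a : Multiset (ℤ × ℤ)) : Multiset (ℤ × ℤ) := a.map fun s => (-s.2, -s.1)

lemma mem_rect_iff {A B C : ℤ} (s : ℤ × ℤ) :
    s ∈ rectMulti A B C ↔ ∃ z : ℤ, A ≤ z ∧ z ≤ C ∧ s = (z, z + (B - A)) := by
  simp only [rectMulti, Multiset.mem_map]
  simp
  constructor
  · rintro ⟨n, hn, rfl⟩
    exact ⟨A + n, by omega, by omega, by simp [Prod.ext_iff]; omega⟩
  · rintro ⟨z, h1, h2, rfl⟩
    exact ⟨(z - A).toNat, by omega, by simp [Prod.ext_iff]; omega⟩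

lemma adj_iff {a b c d : ℤ} (hab : a ≤ b) (hcd : c ≤ d) :
    (Finset.Icc a b ∩ Finset.Icc c d = ∅ ∧
      IsZSegment (Finset.Icc a b ∪ Finset.Icc c d)) ↔ (b + 1 = c ∨ d + 1 = a) := by
  constructor
  · rintro ⟨hdisj, x, y, hxy, heq⟩
    have Hd : ∀ z : ℤ, ¬((a ≤ z ∧ z ≤ b) ∧ (c ≤ z ∧ z ≤ d)) := by
      intro z hz
      have : z ∈ Finset.Icc a b ∩ Finset.Icc c d := by
        simp [Finset.mem_inter, Finset.mem_Icc]; tauto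
      rw [hdisj] at this; simp at this
    have Hu : ∀ z : ℤ, ((a ≤ z ∧ z ≤ b) ∨ (c ≤ z ∧ z ≤ d)) ↔ (x ≤ z ∧ z ≤ y) := by
      intro z
      have := Finset.ext_iff.mp heq z
      simpa [Finset.mem_union, Finset.mem_Icc] using this
    have h1 := Hu a; have h2 := Hu c; have h3 := Hu (b + 1); have h4 := Hu (d + 1)
    have h5 := Hd a; have h6 := Hd c
    omega
  · rintro (h | h)
    · refine ⟨Finset.eq_empty_iff_forall_notMem.mpr fun z hz => ?_,
        a, d, by omega, ?_⟩
      · simp only [Finset.mem_inter, Finset.mem_Icc] at hz; omega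
      · ext z; simp only [Finset.mem_union, Finset.mem_Icc]; omega
    · refine ⟨Finset.eq_empty_iff_forall_notMem.mpr fun z hz => ?_,
        c, b, by omega, ?_⟩
      · simp only [Finset.mem_inter, Finset.mem_Icc] at hz; omega
      · ext z; simp only [Finset.mem_union, Finset.mem_Icc]; omega

theorem speh_contact_iff
    (A1 B1 C1 D1 A2 B2 C2 D2 : ℤ)
    (h1 : SpehQuad A1 B1 C1 D1) (h2 : SpehQuad A2 B2 C2 D2) :
    (∃ s1 ∈ rectMulti A1 B1 C1, ∃ s2 ∈ rectMulti A2 B2 C2,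
      segSet s1 ∩ segSet s2 = ∅ ∧ IsZSegment (segSet s1 ∪ segSet s2)) ↔
    (Finset.Icc A1 C1 ∩ Finset.Icc (B2 + 1) (D2 + 1) ≠ ∅ ∨
      Finset.Icc (B1 + 1) (D1 + 1) ∩ Finset.Icc A2 C2 ≠ ∅) := by
  obtain ⟨hAB1, hAC1, hD1⟩ := h1
  obtain ⟨hAB2, hAC2, hD2⟩ := h2
  constructor
  · rintro ⟨s1, hs1, s2, hs2, hdisj, hseg⟩
    rw [mem_rect_iff] at hs1 hs2
    obtain ⟨z1, hz1a, hz1c, rfl⟩ := hs1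
    obtain ⟨z2, hz2a, hz2c, rfl⟩ := hs2
    simp only [segSet] at hdisj hseg
    have hadj := (adj_iff (show z1 ≤ z1 + (B1 - A1) by omega)
      (show z2 ≤ z2 + (B2 - A2) by omega)).mp ⟨hdisj, hseg⟩
    rcases hadj with h | h
    · right
      refine Finset.Nonempty.ne_empty ⟨z2, ?_⟩
      simp only [Finset.mem_inter, Finset.mem_Icc]; omega
    · left
      refine Finset.Nonempty.ne_empty ⟨z1, ?_⟩
      simp only [Finset.mem_inter, Finset.mem_Icc]; omega
  · rintro (h | h)
    · obtain ⟨z, hz⟩ := Finset.nonempty_of_ne_empty h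
      simp only [Finset.mem_inter, Finset.mem_Icc] at hz
      refine ⟨(z, z + (B1 - A1)), (mem_rect_iff _).mpr ⟨z, by omega, by omega, rfl⟩,
        (z - B2 - 1 + A2, z - B2 - 1 + A2 + (B2 - A2)),
        (mem_rect_iff _).mpr ⟨z - B2 - 1 + A2, by omega, by omega, rfl⟩, ?_⟩
      have := (adj_iff (show z ≤ z + (B1 - A1) by omega)
        (show z - B2 - 1 + A2 ≤ z - B2 - 1 + A2 + (B2 - A2) by omega)).mpr
        (Or.inr (by omega))
      simpa [segSet] using this
    · obtain ⟨z, hz⟩ := Finset.nonempty_of_ne_empty h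
      simp only [Finset.mem_inter, Finset.mem_Icc] at hz
      refine ⟨(z - B1 - 1 + A1, z - B1 - 1 + A1 + (B1 - A1)),
        (mem_rect_iff _).mpr ⟨z - B1 - 1 + A1, by omega, by omega, rfl⟩,
        (z, z + (B2 - A2)), (mem_rect_iff _).mpr ⟨z, by omega, by omega, rfl⟩, ?_⟩
      have := (adj_iff (show z - B1 - 1 + A1 ≤ z - B1 - 1 + A1 + (B1 - A1) by omega)
        (show z ≤ z + (B2 - A2) by omega)).mpr (Or.inl (by omega))
      simpa [segSet] using this
end

section
/- Let M1 = (A1,B1,C1,D1) and M2 = (A2,B2,C2,D2) be Speh quadruples with B1 < D1 (equivalently A1 < C1). Assume: (1) it is not the case that [Finset.Icc A1 D1 ∪ Finset.Icc A2 D2 is a ℤ-segment and (M1 <strong M2 or M2 <strong M1)]; (2) C2 + D2 ≤ C1 + D1; (3) if C2 + D2 = C1 + D1 then 1 ≤ D1 − B1 and D1 − B1 ≤ D2 − B2. Set M1' = (A1, B1, C1−1, D1−1), again a Speh quadruple. Then it is not the case that [Finset.Icc A1 (D1−1) ∪ Finset.Icc A2 D2 is a ℤ-segment and (M1' <strong M2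 or M2 <strong M1')]. -/
theorem irreducibility_preserved_by_shrinking
    (A1 B1 C1 D1 A2 B2 C2 D2 : ℤ)
    (h1 : SpehQuad A1 B1 C1 D1) (h2 : SpehQuad A2 B2 C2 D2)
    (hBD : B1 < D1)
    (hirr : ¬ (IsZSegment (Finset.Icc A1 D1 ∪ Finset.Icc A2 D2) ∧
      (StrongLt A1 B1 C1 D1 A2 B2 C2 D2 ∨ StrongLt A2 B2 C2 D2 A1 B1 C1 D1)))
    (hCD : C2 + D2 ≤ C1 + D1)
    (hEq : C2 + D2 = C1 + D1 → 1 ≤ D1 - B1 ∧ D1 - B1 ≤ D2 - B2) :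
    ¬ (IsZSegment (Finset.Icc A1 (D1 - 1) ∪ Finset.Icc A2 D2) ∧
      (StrongLt A1 B1 (C1 - 1) (D1 - 1) A2 B2 C2 D2 ∨
        StrongLt A2 B2 C2 D2 A1 B1 (C1 - 1) (D1 - 1))) := by
  obtain ⟨hab1, hac1, hsum1⟩ := h1
  obtain ⟨hab2, hac2, hsum2⟩ := h2
  rintro ⟨hseg, h | h⟩
  · obtain ⟨hA, hB, hC, hD⟩ := h
    have heq : C2 + D2 = C1 + D1 := by omega
    have := hEq heq
    omega
  · obtain ⟨hA, hB, hC, hD⟩ := h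
    apply hirr
    refine ⟨?_, Or.inr ⟨hA, hB, by omega, by omega⟩⟩
    obtain ⟨x, y, hxy, hIcc⟩ := hseg
    have key : A1 ≤ D2 + 1 := by
      by_contra hk
      push_neg at hk
      have hA2 : A2 ∈ Finset.Icc A1 (D1 - 1) ∪ Finset.Icc A2 D2 := by
        simp only [Finset.mem_union, Finset.mem_Icc]; omega
      have hD1 : (D1 - 1) ∈ Finset.Icc A1 (D1 - 1) ∪ Finset.Icc A2 D2 := by
        simp only [Finset.mem_union, Finset.mem_Icc]; omega
      rw [hIcc] at hA2 hD1
      simp only [Finset.mem_Icc] at hA2 hD1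
      have hmid : (D2 + 1) ∈ Finset.Icc x y := by
        simp only [Finset.mem_Icc]; omega
      rw [← hIcc] at hmid
      simp only [Finset.mem_union, Finset.mem_Icc] at hmid
      omega
    refine ⟨A2, D1, by omega, ?_⟩
    ext z
    simp only [Finset.mem_union, Finset.mem_Icc]
    omega
end

section
/- Let (A,B,C,D) be a Speh quadruple. Then MWA(m(A,B,C,D)) = m(A,C,B,D); that is, the Zelevinsky dual of the rectangular multisegment consisting of the C−A+1 segments [A,B], [A+1,B+1], …, [C,D] is the rectangular multisegment consisting of the B−A+1 segments [A,C], [A+1,C+1], …, [B,D]. -/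
section Helpers

lemma rect_def (A B C : ℤ) : rectMulti A B C =
    (Multiset.range (C - A + 1).toNat).map (fun j : ℕ => (A + (j:ℤ), B + (j:ℤ))) := by
  unfold rectMulti
  simp [Bind.bind, Pure.pure, Multiset.bind_singleton, Multiset.map_map]

lemma msMaxD_eq {m : Multiset ℤ} {a : ℤ} (ha : a ∈ m) (h : ∀ b ∈ m, b ≤ a) :
    msMaxD m = a := by
  unfold msMaxD
  have hm : m.toFinset.max = (a : WithBot ℤ) := by
    apply le_antisymm
    · exact Finset.max_le fun b hb => WithBot.coe_le_coe.2 (h b (Multiset.mem_toFinset.1 hb))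
    · exact Finset.le_max (Multiset.mem_toFinset.2 ha)
  simp [hm]

lemma msMaxD_singleton (a : ℤ) : msMaxD {a} = a :=
  msMaxD_eq (by simp) (by simp)

lemma rect_eq_zero {A B C : ℤ} (h : C < A) : rectMulti A B C = 0 := by
  rw [rect_def]
  have h0 : (C - A + 1).toNat = 0 := by omega
  simp [h0]

lemma rect_cons {A B C : ℤ} (h : A ≤ C) :
    rectMulti A B C = (C, B + (C - A)) ::ₘ rectMulti A B (C - 1) := by
  rw [rect_def, rect_def]
  have h1 : (C - A + 1).toNat = (C - 1 - A + 1).toNat + 1 := by omega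
  rw [h1, Multiset.range_succ, Multiset.map_cons]
  have h2 : ((C - 1 - A + 1).toNat : ℤ) = C - A := by omega
  rw [h2]
  have h3 : A + (C - A) = C := by ring
  rw [h3]

lemma mem_rect {A B C : ℤ} {s : ℤ × ℤ} :
    s ∈ rectMulti A B C ↔ ∃ j : ℤ, 0 ≤ j ∧ j ≤ C - A ∧ s = (A + j, B + j) := by
  rw [rect_def]
  simp only [Multiset.mem_map, Multiset.mem_range]
  constructor
  · rintro ⟨j, hj, rfl⟩
    exact ⟨(j : ℤ), by exact_mod_cast Nat.zero_le j, by omega, rfl⟩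
  · rintro ⟨j, h0, hle, rfl⟩
    exact ⟨j.toNat, by omega, by rw [Int.toNat_of_nonneg h0]⟩

lemma rect_card (A B C : ℤ) : Multiset.card (rectMulti A B C) = (C - A + 1).toNat := by
  rw [rect_def]; simp

lemma rect_ne_zero {A B C : ℤ} (hAC : A ≤ C) : rectMulti A B C ≠ 0 := by
  rw [rect_cons hAC]; simp

lemma rect_snd_max {A B C : ℤ} (h : A ≤ C) :
    msMaxD ((rectMulti A B C).map Prod.snd) = B + (C - A) := by
  apply msMaxD_eq
  · simp only [Multiset.mem_map]
    exact ⟨(C, B + (C - A)), by rw [rect_cons h]; exact Multiset.mem_cons_self _ _, rfl⟩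
  · intro b hb
    simp only [Multiset.mem_map] at hb
    obtain ⟨s, hs, rfl⟩ := hb
    obtain ⟨j, h0, hle, rfl⟩ := mem_rect.1 hs
    simp only
    omega

lemma filter_chain_zero {A B C e b : ℤ} (he : B + (C - A) < e) :
    (rectMulti A B C).filter (fun s => s.2 = e ∧ s.1 < b) = 0 := by
  rw [Multiset.filter_eq_nil]
  intro s hs
  obtain ⟨j, h0, hle, rfl⟩ := mem_rect.1 hs
  simp only [not_and]
  intro h1
  omega

lemma filter_chain {A B C b : ℤ} (hAC : A ≤ C) (hb : C < b) :
    (rectMulti A B C).filter (fun s => s.2 = B + (C - A) ∧ s.1 < b)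
      = {(C, B + (C - A))} := by
  rw [rect_cons hAC, Multiset.filter_cons_of_pos _ ⟨rfl, hb⟩,
    filter_chain_zero (by omega)]
  rfl

lemma filter_end_zero {A B C e : ℤ} (he : B + (C - A) < e) :
    (rectMulti A B C).filter (fun s => s.2 = e) = 0 := by
  rw [Multiset.filter_eq_nil]
  intro s hs
  obtain ⟨j, h0, hle, rfl⟩ := mem_rect.1 hs
  simp only
  omega

lemma filter_end {A B C : ℤ} (hAC : A ≤ C) :
    (rectMulti A B C).filter (fun s => s.2 = B + (C - A)) = {(C, B + (C - A))} := by
  rw [rect_cons hAC]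
  rw [Multiset.filter_cons]
  rw [filter_end_zero (show B + (C - 1 - A) < B + (C - A) by omega)]
  simp

lemma chain_rect (A B : ℤ) (hAB : A ≤ B) :
    ∀ (n : ℕ) (C' b e : ℤ), b = C' + 1 → e = B + (C' - A) → (C' - A + 1).toNat ≤ n →
      chainAux n (rectMulti A B C') b e =
        ((C' - A + 1).toNat, if A ≤ B - 1 then rectMulti A (B - 1) C' else 0) := by
  intro n
  induction n with
  | zero =>
    intro C' b e hb he hn
    have hC : C' < A := by omega
    have h0 : (C' - A + 1).toNat = 0 := by omega
    rw [rect_eq_zero hC, h0, chainAux]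
    rw [rect_eq_zero (show C' < A by omega)]
    simp
  | succ n ih =>
    intro C' b e hb he hn
    by_cases hC : C' < A
    · have h0 : (C' - A + 1).toNat = 0 := by omega
      rw [rect_eq_zero hC, h0, rect_eq_zero (show C' < A by omega)]
      simp [chainAux]
    · push_neg at hC
      subst hb he
      simp only [chainAux]
      rw [filter_chain hC (by omega)]
      rw [if_neg (by simp)]
      rw [Multiset.map_singleton]
      simp only [msMaxD_singleton]
      rw [rect_cons hC, Multiset.erase_cons_head]
      rw [ih (C' - 1) C' (B + (C' - A) - 1) (by ring) (by ring) (by omega)]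
      have hcnt : (C' - 1 - A + 1).toNat + 1 = (C' - A + 1).toNat := by omega
      by_cases hB : A ≤ B - 1
      · rw [if_pos hB, if_pos hB]
        refine Prod.ext hcnt ?_
        simp only
        rw [truncate, if_pos (by simp only; omega)]
        rw [rect_cons (show A ≤ C' from hC)]
        rw [Multiset.singleton_add]
        congr 2
        omega
      · rw [if_neg hB, if_neg hB]
        refine Prod.ext hcnt ?_
        simp only
        rw [truncate, if_neg (by simp only; omega)]
        simp

lemma step_rect {A B C : ℤ} (hAB : A ≤ B) (hAC : A ≤ C) :
    mwaStep (rectMulti A B C) =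
      ((B, B + (C - A)), if A ≤ B - 1 then rectMulti A (B - 1) C else 0) := by
  simp only [mwaStep]
  rw [rect_snd_max hAC, filter_end hAC, Multiset.map_singleton, msMaxD_singleton]
  rw [rect_cons hAC, Multiset.erase_cons_head, ← rect_cons hAC, rect_card]
  rw [chain_rect A B hAB _ (C - 1) C (B + (C - A) - 1) (by ring) (by ring) (by omega)]
  have h1 : ((C - 1 - A + 1).toNat : ℤ) = C - A := by omega
  refine Prod.ext ?_ ?_
  · simp only
    refine Prod.ext ?_ rfl
    simp only [h1]
    ring
  · simp only
    by_cases hB : A ≤ B - 1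
    · rw [if_pos hB, if_pos hB]
      rw [truncate, if_pos (by simp only; omega)]
      rw [rect_cons (show A ≤ C from hAC), Multiset.singleton_add]
      congr 2
      omega
    · rw [if_neg hB, if_neg hB]
      rw [truncate, if_neg (by simp only; omega)]
      simp

lemma mwaAux_zero (n : ℕ) : mwaAux n 0 = 0 := by
  cases n <;> simp [mwaAux]

lemma main_aux : ∀ (n : ℕ) (A B C : ℤ), A ≤ B → A ≤ C → (B - A).toNat < n →
    mwaAux n (rectMulti A B C) = rectMulti A C B := by
  intro n
  induction n with
  | zero => intro A B C h1 h2 h3; omega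
  | succ n ih =>
    intro A B C hAB hAC hn
    simp only [mwaAux]
    rw [if_neg (rect_ne_zero hAC), step_rect hAB hAC]
    by_cases hB : A ≤ B - 1
    · rw [if_pos hB, ih A (B - 1) C (by omega) hAC (by omega)]
      rw [rect_cons (show A ≤ B from hAB)]
      congr 2
      ring
    · rw [if_neg hB, mwaAux_zero]
      have hBA : B = A := by omega
      subst hBA
      rw [rect_cons (le_refl B), rect_eq_zero (show B - 1 < B by omega)]
      congr 2
      ring

lemma msSize_rect (A B C : ℤ) :
    msSize (rectMulti A B C) = (C - A + 1).toNat * (B - A + 1).toNat := by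
  rw [msSize, rect_def, Multiset.map_map]
  have h : ((fun s : ℤ × ℤ => (s.2 + 1 - s.1).toNat) ∘ fun j : ℕ => (A + (j:ℤ), B + (j:ℤ)))
      = fun _ : ℕ => (B - A + 1).toNat := by
    funext j
    simp only [Function.comp]
    congr 1
    ring
  rw [h, Multiset.map_const', Multiset.sum_replicate, Multiset.card_range, smul_eq_mul]

end Helpers

theorem mwa_rectangular
    (A B C D : ℤ) (h : SpehQuad A B C D) :
    MWA (rectMulti A B C) = rectMulti A C B := by
  obtain ⟨hAB, hAC, _⟩ := h
  apply main_aux _ A B C hAB hAC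
  rw [msSize_rect]
  calc (B - A).toNat < (B - A + 1).toNat := by omega
    _ ≤ (C - A + 1).toNat * (B - A + 1).toNat :=
        Nat.le_mul_of_pos_left _ (by omega)
end

section
/- Let (A1,B1,C1,D1) and (A2,B2,C2,D2) be Speh quadruples with A1 ≤ A2 and D2 ≤ D1 (so that the support Icc A2 D2 of the second is contained in the support Icc A1 D1 of the first). Then MWA(m1 + m2) = MWA(m1) + MWA(m2), where m_i = m(A_i,B_i,C_i,D_i) and + denotes multiset sum. -/
namespace MWAProof

open Multiset

/-- rectangle with explicit count -/
def rectN (A B : ℤ) (t : ℕ) : Multiset (ℤ × ℤ) :=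
  (Multiset.range t).map fun j : ℕ => (A + (j : ℤ), B + (j : ℤ))

lemma rectMulti_eq (A B C : ℤ) : rectMulti A B C = rectN A B (C - A + 1).toNat := by
  simp [rectMulti, rectN, Multiset.map_map]

lemma rectN_succ (A B : ℤ) (t : ℕ) :
    rectN A B (t + 1) = (A + (t : ℤ), B + (t : ℤ)) ::ₘ rectN A B t := by
  simp [rectN, Multiset.range_succ]

lemma rectN_zero (A B : ℤ) : rectN A B 0 = 0 := rfl

lemma mem_rectN {s : ℤ × ℤ} {A B : ℤ} {t : ℕ} :
    s ∈ rectN A B t ↔ ∃ j : ℕ, j < t ∧ s = (A + (j : ℤ), B + (j : ℤ)) := by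
  unfold rectN
  rw [Multiset.mem_map]
  constructor
  · rintro ⟨j, hj, h⟩; exact ⟨j, Multiset.mem_range.1 hj, h.symm⟩
  · rintro ⟨j, hj, h⟩; exact ⟨j, Multiset.mem_range.2 hj, h.symm⟩

lemma rectN_split (A B : ℤ) (u v : ℕ) :
    rectN A B (u + v) = rectN A B u + rectN (A + u) (B + u) v := by
  induction v with
  | zero => simp [rectN_zero]
  | succ v ih =>
      have h1 : u + (v + 1) = (u + v) + 1 := by omega
      rw [h1, rectN_succ, ih, rectN_succ]
      have e1 : A + (u : ℤ) + (v : ℤ) = A + ((u + v : ℕ) : ℤ) := by push_cast; ring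
      have e2 : B + (u : ℤ) + (v : ℤ) = B + ((u + v : ℕ) : ℤ) := by push_cast; ring
      rw [e1, e2]
      exact (Multiset.add_cons _ _ _).symm

lemma card_rectN (A B : ℤ) (t : ℕ) : Multiset.card (rectN A B t) = t := by
  simp [rectN]

lemma rectN_ne_zero (A B : ℤ) (t : ℕ) (ht : 1 ≤ t) : rectN A B t ≠ 0 := by
  intro h
  have := card_rectN A B t
  rw [h] at this
  simp at this
  omega

lemma valid_rectN {A B : ℤ} (h : A ≤ B) (t : ℕ) : ValidMS (rectN A B t) := by
  intro s hs
  rcases mem_rectN.1 hs with ⟨j, hj, rfl⟩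
  simpa using by omega

lemma valid_zero : ValidMS 0 := by intro s hs; simp at hs

lemma valid_add {a b : Multiset (ℤ × ℤ)} (ha : ValidMS a) (hb : ValidMS b) :
    ValidMS (a + b) := by
  intro s hs
  rcases Multiset.mem_add.1 hs with h | h
  · exact ha s h
  · exact hb s h

lemma msMaxD_spec {m : Multiset ℤ} {x : ℤ} (hx : x ∈ m) (hb : ∀ y ∈ m, y ≤ x) :
    msMaxD m = x := by
  unfold msMaxD
  have hx' : x ∈ m.toFinset := Multiset.mem_toFinset.2 hx
  have h1 : m.toFinset.max = (x : WithBot ℤ) := by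
    apply le_antisymm
    · exact Finset.max_le fun y hy => WithBot.coe_le_coe.2 (hb y (Multiset.mem_toFinset.1 hy))
    · exact Finset.le_max hx'
  rw [h1]; rfl

lemma msMaxD_mem {m : Multiset ℤ} (h : m ≠ 0) : msMaxD m ∈ m := by
  obtain ⟨x, hx⟩ := Multiset.exists_mem_of_ne_zero h
  obtain ⟨y, hy⟩ := Finset.max_of_mem (Multiset.mem_toFinset.2 hx)
  have hmem : y ∈ m.toFinset := Finset.mem_of_max hy
  have : msMaxD m = y := by unfold msMaxD; rw [hy]; rfl
  rw [this]
  exact Multiset.mem_toFinset.1 hmem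

lemma msSize_zero : msSize 0 = 0 := rfl

lemma msSize_add (a b : Multiset (ℤ × ℤ)) : msSize (a + b) = msSize a + msSize b := by
  simp [msSize]

lemma msSize_cons (s : ℤ × ℤ) (a : Multiset (ℤ × ℤ)) :
    msSize (s ::ₘ a) = (s.2 + 1 - s.1).toNat + msSize a := by
  simp [msSize]


lemma chainAux_succ (n : ℕ) (rem : Multiset (ℤ × ℤ)) (b e : ℤ) :
    chainAux (n + 1) rem b e =
      if (rem.filter fun s => s.2 = e ∧ s.1 < b) = 0 then (0, rem)
      else
        ((chainAux n (rem.erase (msMaxD ((rem.filter fun s => s.2 = e ∧ s.1 < b).map Prod.fst), e))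
            (msMaxD ((rem.filter fun s => s.2 = e ∧ s.1 < b).map Prod.fst)) (e - 1)).1 + 1,
         truncate (msMaxD ((rem.filter fun s => s.2 = e ∧ s.1 < b).map Prod.fst), e) +
          (chainAux n (rem.erase (msMaxD ((rem.filter fun s => s.2 = e ∧ s.1 < b).map Prod.fst), e))
            (msMaxD ((rem.filter fun s => s.2 = e ∧ s.1 < b).map Prod.fst)) (e - 1)).2) := rfl

/-- trivial stop: nothing qualifies -/
lemma chain_stop (n : ℕ) (rem : Multiset (ℤ × ℤ)) (b e : ℤ)
    (h : ∀ s ∈ rem, s.2 = e → b ≤ s.1) : chainAux n rem b e = (0, rem) := by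
  cases n with
  | zero => rfl
  | succ n =>
      rw [chainAux_succ]
      rw [if_pos]
      rw [Multiset.filter_eq_nil]
      rintro s hs ⟨h1, h2⟩
      exact absurd (h s hs h1) (not_le.2 h2)

/-- one stage of the chain, choosing element `v` -/
lemma chain_step1 (n : ℕ) (rem : Multiset (ℤ × ℤ)) (b e : ℤ) (v : ℤ × ℤ)
    (hv : v ∈ rem) (hve : v.2 = e) (hvb : v.1 < b)
    (hmax : ∀ s ∈ rem, s.2 = e → s.1 < b → s.1 ≤ v.1) :
    chainAux (n + 1) rem b e =
      ((chainAux n (rem.erase v) v.1 (e - 1)).1 + 1,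
        truncate v + (chainAux n (rem.erase v) v.1 (e - 1)).2) := by
  rw [chainAux_succ]
  have hvS : v ∈ rem.filter fun s => s.2 = e ∧ s.1 < b :=
    Multiset.mem_filter.2 ⟨hv, hve, hvb⟩
  have hS : (rem.filter fun s => s.2 = e ∧ s.1 < b) ≠ 0 := by
    intro h; rw [h] at hvS; simp at hvS
  rw [if_neg hS]
  have hmax' : msMaxD ((rem.filter fun s => s.2 = e ∧ s.1 < b).map Prod.fst) = v.1 := by
    apply msMaxD_spec
    · exact Multiset.mem_map.2 ⟨v, hvS, rfl⟩
    · intro y hy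
      rcases Multiset.mem_map.1 hy with ⟨s, hs, rfl⟩
      rcases Multiset.mem_filter.1 hs with ⟨hs1, hs2, hs3⟩
      exact hmax s hs1 hs2 hs3
  rw [hmax']
  have hveq : (v.1, e) = v := by rw [← hve]
  rw [hveq]

/-- the chain runs all the way down a rectangle, `other` inert, exact alignment -/
lemma chain_exact (A B : ℤ) (t : ℕ) : ∀ n : ℕ, t ≤ n → ∀ other : Multiset (ℤ × ℤ),
    chainAux n (rectN A B t + other) (A + (t : ℤ)) (B + (t : ℤ) - 1)
      = ((chainAux (n - t) other A (B - 1)).1 + t,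
         (if A ≤ B - 1 then rectN A (B - 1) t else 0) +
           (chainAux (n - t) other A (B - 1)).2) := by
  induction t with
  | zero =>
      intro n _ other
      simp [rectN_zero]
  | succ t ih =>
      intro n hn other
      obtain ⟨n', rfl⟩ : ∃ n', n = n' + 1 := ⟨n - 1, by omega⟩
      have hrem : rectN A B (t + 1) + other
          = (A + (t : ℤ), B + (t : ℤ)) ::ₘ (rectN A B t + other) := by
        rw [rectN_succ, Multiset.cons_add]
      have he : B + ((t : ℕ) + 1 : ℕ) - 1 = B + (t : ℤ) := by push_cast; ring
      rw [he, hrem]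
      rw [chain_step1 n' _ _ _ (A + (t : ℤ), B + (t : ℤ))
        (Multiset.mem_cons_self _ _) rfl (by push_cast; omega) ?hmax]
      case hmax =>
        rintro s hs hs2 hs3
        rcases Multiset.mem_cons.1 hs with rfl | hs'
        · rfl
        rcases Multiset.mem_add.1 hs' with h | h
        · rcases mem_rectN.1 h with ⟨j, hj, rfl⟩
          simp only at hs2 ⊢
          omega
        · simp only at hs3 ⊢
          push_cast at hs3
          omega
      rw [Multiset.erase_cons_head]
      have hcall : chainAux n' (rectN A B t + other) (A + (t : ℤ)) (B + (t : ℤ) - 1)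
          = ((chainAux (n' - t) other A (B - 1)).1 + t,
             (if A ≤ B - 1 then rectN A (B - 1) t else 0) +
               (chainAux (n' - t) other A (B - 1)).2) := ih n' (by omega) other
      rw [hcall]
      have hfuel : n' + 1 - (t + 1) = n' - t := by omega
      rw [hfuel]
      rw [Prod.mk.injEq]
      refine ⟨by omega, ?_⟩
      show truncate (A + (t : ℤ), B + (t : ℤ)) +
          ((if A ≤ B - 1 then rectN A (B - 1) t else 0) + (chainAux (n' - t) other A (B - 1)).2)
        = (if A ≤ B - 1 then rectN A (B - 1) (t + 1) else 0) + (chainAux (n' - t) other A (B - 1)).2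
      unfold truncate
      simp only
      split_ifs with h h2
      · rw [rectN_succ]
        have hB : B + (t : ℤ) - 1 = B - 1 + (t : ℤ) := by ring
        rw [hB, Multiset.singleton_add, ← Multiset.cons_add, Multiset.cons_add]
      · exfalso; omega
      · exfalso; omega
      · simp
lemma mwaStep_eq (a : Multiset (ℤ × ℤ)) :
    mwaStep a =
      ((msMaxD (a.map Prod.snd) -
          (chainAux a.card
            (a.erase (msMaxD ((a.filter fun s => s.2 = msMaxD (a.map Prod.snd)).map Prod.fst),
              msMaxD (a.map Prod.snd)))
            (msMaxD ((a.filter fun s => s.2 = msMaxD (a.map Prod.snd)).map Prod.fst))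
            (msMaxD (a.map Prod.snd) - 1)).1,
        msMaxD (a.map Prod.snd)),
       truncate (msMaxD ((a.filter fun s => s.2 = msMaxD (a.map Prod.snd)).map Prod.fst),
          msMaxD (a.map Prod.snd)) +
        (chainAux a.card
            (a.erase (msMaxD ((a.filter fun s => s.2 = msMaxD (a.map Prod.snd)).map Prod.fst),
              msMaxD (a.map Prod.snd)))
            (msMaxD ((a.filter fun s => s.2 = msMaxD (a.map Prod.snd)).map Prod.fst))
            (msMaxD (a.map Prod.snd) - 1)).2) := rfl

/-- The MW step on `rectN A B (t+1) + other` when the chain consumes exactly the rectangle. -/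
lemma step_rect (A B : ℤ) (t : ℕ) (other : Multiset (ℤ × ℤ)) (hAB : A ≤ B)
    (hC1 : ∀ s ∈ other, s.2 ≤ B + (t : ℤ))
    (hC2 : ∀ s ∈ other, s.2 = B + (t : ℤ) → s.1 ≤ A + (t : ℤ))
    (hC3 : ∀ s ∈ other, s.2 = B - 1 → A ≤ s.1) :
    mwaStep (rectN A B (t + 1) + other)
      = ((B, B + (t : ℤ)),
         (if A ≤ B - 1 then rectN A (B - 1) (t + 1) else 0) + other) := by
  set M := rectN A B (t + 1) + other with hM
  have htop : (A + (t : ℤ), B + (t : ℤ)) ∈ M := by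
    rw [hM]
    exact Multiset.mem_add.2 (Or.inl (mem_rectN.2 ⟨t, by omega, rfl⟩))
  have hx : msMaxD (M.map Prod.snd) = B + (t : ℤ) := by
    apply msMaxD_spec
    · exact Multiset.mem_map.2 ⟨_, htop, rfl⟩
    · intro y hy
      rcases Multiset.mem_map.1 hy with ⟨s, hs, rfl⟩
      rcases Multiset.mem_add.1 hs with h | h
      · rcases mem_rectN.1 h with ⟨j, hj, rfl⟩; simp only; omega
      · exact hC1 s h
  have hb1 : msMaxD ((M.filter fun s => s.2 = B + (t : ℤ)).map Prod.fst) = A + (t : ℤ) := by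
    apply msMaxD_spec
    · exact Multiset.mem_map.2 ⟨_, Multiset.mem_filter.2 ⟨htop, rfl⟩, rfl⟩
    · intro y hy
      rcases Multiset.mem_map.1 hy with ⟨s, hs, rfl⟩
      rcases Multiset.mem_filter.1 hs with ⟨hs1, hs2⟩
      rcases Multiset.mem_add.1 hs1 with h | h
      · rcases mem_rectN.1 h with ⟨j, hj, rfl⟩
        simp only at hs2 ⊢
        omega
      · exact hC2 s h hs2
  have herase : M.erase (A + (t : ℤ), B + (t : ℤ)) = rectN A B t + other := by
    rw [hM, rectN_succ, Multiset.cons_add, Multiset.erase_cons_head]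
  have hcard : Multiset.card M = (t + 1) + Multiset.card other := by
    rw [hM, Multiset.card_add, card_rectN]
  rw [mwaStep_eq, hx, hb1, herase]
  have hchain : chainAux (Multiset.card M) (rectN A B t + other)
      (A + (t : ℤ)) (B + (t : ℤ) - 1)
      = ((chainAux (Multiset.card M - t) other A (B - 1)).1 + t,
         (if A ≤ B - 1 then rectN A (B - 1) t else 0) +
           (chainAux (Multiset.card M - t) other A (B - 1)).2) :=
    chain_exact A B t _ (by omega) other
  have hstop : chainAux (Multiset.card M - t) other A (B - 1) = (0, other) :=
    chain_stop _ _ _ _ hC3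
  rw [hchain, hstop]
  rw [Prod.mk.injEq]
  constructor
  · rw [Prod.mk.injEq]
    constructor
    · simp only; push_cast; ring
    · rfl
  · show truncate (A + (t : ℤ), B + (t : ℤ)) +
        ((if A ≤ B - 1 then rectN A (B - 1) t else 0) + other) = _
    unfold truncate
    simp only
    split_ifs with h h2
    · rw [rectN_succ]
      have hB : B + (t : ℤ) - 1 = B - 1 + (t : ℤ) := by ring
      rw [hB, Multiset.singleton_add, ← Multiset.cons_add, Multiset.cons_add]
    · exfalso; omega
    · exfalso; omega
    · simp
/-- The MW step in the mixed case: the chain consumes all of `m2` and the lower part of `m1`. -/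
lemma step_mixed (A1 B1 A2 : ℤ) (u v : ℕ)
    (hA1B1 : A1 ≤ B1 - 1) (hA2l : A1 + (u : ℤ) + 1 < A2) (hA2B2 : A2 ≤ B1 + (u : ℤ) + 1) :
    mwaStep (rectN A1 B1 ((u + 1) + (v + 1)) + rectN A2 (B1 + (u : ℤ) + 1) (v + 1))
      = ((B1, B1 + (u : ℤ) + 1 + (v : ℤ)),
         (if A2 ≤ B1 + (u : ℤ) then rectN A2 (B1 + (u : ℤ)) (v + 1) else 0)
           + (rectN A1 (B1 - 1) (u + 1)
              + rectN (A1 + (u : ℤ) + 1) (B1 + (u : ℤ) + 1) (v + 1))) := by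
  set B2 : ℤ := B1 + (u : ℤ) + 1 with hB2
  set m1 : Multiset (ℤ × ℤ) := rectN A1 B1 ((u + 1) + (v + 1)) with hm1
  set m2 : Multiset (ℤ × ℤ) := rectN A2 B2 (v + 1) with hm2
  set M : Multiset (ℤ × ℤ) := m1 + m2 with hM
  set x : ℤ := B2 + (v : ℤ) with hxdef
  -- the maximal end
  have htop2 : (A2 + (v : ℤ), B2 + (v : ℤ)) ∈ M :=
    Multiset.mem_add.2 (Or.inr (mem_rectN.2 ⟨v, by omega, rfl⟩))
  have hx : msMaxD (M.map Prod.snd) = x := by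
    apply msMaxD_spec
    · exact Multiset.mem_map.2 ⟨_, htop2, rfl⟩
    · intro y hy
      rcases Multiset.mem_map.1 hy with ⟨s, hs, rfl⟩
      rcases Multiset.mem_add.1 hs with h | h <;>
        · rcases mem_rectN.1 h with ⟨j, hj, rfl⟩; simp only; omega
  -- the chosen beginning
  have hb1 : msMaxD ((M.filter fun s => s.2 = x).map Prod.fst) = A2 + (v : ℤ) := by
    apply msMaxD_spec
    · exact Multiset.mem_map.2 ⟨_, Multiset.mem_filter.2 ⟨htop2, rfl⟩, rfl⟩
    · intro y hy
      rcases Multiset.mem_map.1 hy with ⟨s, hs, rfl⟩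
      rcases Multiset.mem_filter.1 hs with ⟨hs1, hs2⟩
      rcases Multiset.mem_add.1 hs1 with h | h <;>
        · rcases mem_rectN.1 h with ⟨j, hj, rfl⟩; simp only at hs2 ⊢; omega
  have herase : M.erase (A2 + (v : ℤ), x) = rectN A2 B2 v + m1 := by
    rw [hM, hm2, rectN_succ, Multiset.add_cons]
    have : (A2 + (v : ℤ), x) = (A2 + (v : ℤ), B2 + (v : ℤ)) := rfl
    rw [this, Multiset.erase_cons_head, add_comm]
  have hcard : Multiset.card M = (u + v + 2) + (v + 1) := by
    rw [hM, Multiset.card_add, hm1, hm2, card_rectN, card_rectN]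
    omega
  rw [mwaStep_eq, hx, hb1, herase]
  -- first chain segment: all of (the rest of) m2
  have hchain1 : chainAux (Multiset.card M) (rectN A2 B2 v + m1) (A2 + (v : ℤ)) (x - 1)
      = ((chainAux (Multiset.card M - v) m1 A2 (B2 - 1)).1 + v,
         (if A2 ≤ B2 - 1 then rectN A2 (B2 - 1) v else 0) +
           (chainAux (Multiset.card M - v) m1 A2 (B2 - 1)).2) := by
    have he : x - 1 = B2 + (v : ℤ) - 1 := by rw [hxdef]
    rw [he]
    exact chain_exact A2 B2 v _ (by omega) m1
  -- junction step: the top of the lower part of m1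
  obtain ⟨N', hN'⟩ : ∃ N', Multiset.card M - v = N' + 1 := ⟨Multiset.card M - v - 1, by omega⟩
  have hw : ((A1 + (u : ℤ), B1 + (u : ℤ)) : ℤ × ℤ) ∈ m1 :=
    mem_rectN.2 ⟨u, by omega, rfl⟩
  have hsplit : m1 = rectN A1 B1 (u + 1) + rectN (A1 + (u : ℤ) + 1) (B1 + (u : ℤ) + 1) (v + 1) := by
    rw [hm1, rectN_split]
    push_cast
    ring_nf
  have hchain2 : chainAux (Multiset.card M - v) m1 A2 (B2 - 1)
      = ((chainAux N' (m1.erase (A1 + (u : ℤ), B1 + (u : ℤ))) (A1 + (u : ℤ)) (B2 - 1 - 1)).1 + 1,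
          truncate (A1 + (u : ℤ), B1 + (u : ℤ)) +
            (chainAux N' (m1.erase (A1 + (u : ℤ), B1 + (u : ℤ))) (A1 + (u : ℤ)) (B2 - 1 - 1)).2) := by
    rw [hN']
    apply chain_step1
    · exact hw
    · show B1 + (u : ℤ) = B2 - 1
      rw [hB2]; ring
    · show A1 + (u : ℤ) < A2
      omega
    · intro s hs hse hsb
      rw [hm1] at hs
      rcases mem_rectN.1 hs with ⟨j, hj, rfl⟩
      simp only at hse ⊢
      omega
  have herase2 : m1.erase (A1 + (u : ℤ), B1 + (u : ℤ))
      = rectN A1 B1 u + rectN (A1 + (u : ℤ) + 1) (B1 + (u : ℤ) + 1) (v + 1) := by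
    rw [hsplit, rectN_succ, Multiset.cons_add, Multiset.erase_cons_head]
  have hchain3 : chainAux N' (rectN A1 B1 u + rectN (A1 + (u : ℤ) + 1) (B1 + (u : ℤ) + 1) (v + 1))
      (A1 + (u : ℤ)) (B2 - 1 - 1)
      = ((chainAux (N' - u) (rectN (A1 + (u : ℤ) + 1) (B1 + (u : ℤ) + 1) (v + 1)) A1 (B1 - 1)).1 + u,
         (if A1 ≤ B1 - 1 then rectN A1 (B1 - 1) u else 0) +
           (chainAux (N' - u) (rectN (A1 + (u : ℤ) + 1) (B1 + (u : ℤ) + 1) (v + 1)) A1 (B1 - 1)).2) := by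
    have he : B2 - 1 - 1 = B1 + (u : ℤ) - 1 := by rw [hB2]; ring
    rw [he]
    exact chain_exact A1 B1 u _ (by omega) _
  have hstop : chainAux (N' - u) (rectN (A1 + (u : ℤ) + 1) (B1 + (u : ℤ) + 1) (v + 1)) A1 (B1 - 1)
      = (0, rectN (A1 + (u : ℤ) + 1) (B1 + (u : ℤ) + 1) (v + 1)) := by
    apply chain_stop
    intro s hs hse
    rcases mem_rectN.1 hs with ⟨j, hj, rfl⟩
    simp only at hse ⊢
    omega
  rw [hchain1, hchain2, herase2, hchain3, hstop]
  simp only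
  rw [Prod.mk.injEq]
  constructor
  · rw [Prod.mk.injEq]
    constructor
    · show x - (((0 + u) + 1) + v : ℕ) = B1
      rw [hxdef, hB2]; push_cast; ring
    · rw [hxdef, hB2]
  · -- the resulting multiset
    have htr1 : truncate (A2 + (v : ℤ), x)
        = if A2 ≤ B2 - 1 then {(A2 + (v : ℤ), B2 - 1 + (v : ℤ))} else 0 := by
      unfold truncate
      simp only
      have : x - 1 = B2 - 1 + (v : ℤ) := by rw [hxdef]; ring
      rw [this]
      split_ifs with h h2 h2
      · rfl
      · exfalso; omega
      · exfalso; omega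
      · rfl
    have htr2 : truncate (A1 + (u : ℤ), B1 + (u : ℤ)) = {(A1 + (u : ℤ), B1 - 1 + (u : ℤ))} := by
      unfold truncate
      simp only
      rw [if_pos (by omega)]
      have : B1 + (u : ℤ) - 1 = B1 - 1 + (u : ℤ) := by ring
      rw [this]
    rw [htr1, htr2, if_pos hA1B1]
    have hqB2 : B2 - 1 = B1 + (u : ℤ) := by rw [hB2]; ring
    rw [hqB2]
    split_ifs with h
    · rw [rectN_succ A2 (B1 + (u : ℤ)) v, rectN_succ A1 (B1 - 1) u]
      rw [Multiset.singleton_add, Multiset.singleton_add]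
      simp only [Multiset.cons_add, Multiset.add_cons]
      rw [Multiset.cons_swap]
    · rw [hB2, rectN_succ A1 (B1 - 1) u]
      simp [Multiset.cons_add, Multiset.add_cons, Multiset.singleton_add]
lemma valid_of_le {a b : Multiset (ℤ × ℤ)} (h : a ≤ b) (hb : ValidMS b) : ValidMS a :=
  fun s hs => hb s (Multiset.mem_of_le h hs)

lemma valid_truncate (s : ℤ × ℤ) : ValidMS (truncate s) := by
  unfold truncate
  split_ifs with h
  · intro t ht
    rw [Multiset.mem_singleton] at ht
    subst ht
    simpa using by omega
  · exact valid_zero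

lemma valid_chainAux : ∀ (n : ℕ) (rem : Multiset (ℤ × ℤ)) (b e : ℤ),
    ValidMS rem → ValidMS (chainAux n rem b e).2 := by
  intro n
  induction n with
  | zero => intro rem b e h; exact h
  | succ n ih =>
      intro rem b e h
      rw [chainAux_succ]
      split_ifs with hS
      · exact h
      · exact valid_add (valid_truncate _)
          (ih _ _ _ (valid_of_le (Multiset.erase_le _ _) h))

lemma valid_mwaStep (a : Multiset (ℤ × ℤ)) (h : ValidMS a) : ValidMS (mwaStep a).2 := by
  rw [mwaStep_eq]
  exact valid_add (valid_truncate _)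
    (valid_chainAux _ _ _ _ (valid_of_le (Multiset.erase_le _ _) h))

lemma msSize_truncate (b e : ℤ) : msSize (truncate (b, e)) = (e - b).toNat := by
  unfold truncate
  split_ifs with h
  · show msSize ((b, e - 1) ::ₘ 0) = _
    rw [msSize_cons, msSize_zero]
    simp only
    omega
  · rw [msSize_zero]
    simp only at h
    omega

lemma msSize_chainAux : ∀ (n : ℕ) (rem : Multiset (ℤ × ℤ)) (b e : ℤ),
    ValidMS rem → msSize (chainAux n rem b e).2 ≤ msSize rem := by
  intro n
  induction n with
  | zero => intro rem b e _; exact le_rfl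
  | succ n ih =>
      intro rem b e hval
      rw [chainAux_succ]
      split_ifs with hS
      · exact le_rfl
      · set b' := msMaxD ((rem.filter fun s => s.2 = e ∧ s.1 < b).map Prod.fst) with hb'
        have hmem : (b', e) ∈ rem := by
          have h1 : b' ∈ (rem.filter fun s => s.2 = e ∧ s.1 < b).map Prod.fst := by
            apply msMaxD_mem
            intro hz
            exact hS (by simpa using Multiset.map_eq_zero.1 hz)
          rcases Multiset.mem_map.1 h1 with ⟨s, hs, hfst⟩
          rcases Multiset.mem_filter.1 hs with ⟨hs1, hs2, _⟩
          have : (b', e) = s := by rw [← hfst, ← hs2]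
          rw [this]; exact hs1
        have hrem : rem = (b', e) ::ₘ rem.erase (b', e) := (Multiset.cons_erase hmem).symm
        simp only
        calc msSize (truncate (b', e) + (chainAux n (rem.erase (b', e)) b' (e - 1)).2)
            = msSize (truncate (b', e)) + msSize (chainAux n (rem.erase (b', e)) b' (e - 1)).2 :=
              msSize_add _ _
          _ ≤ (e - b').toNat + msSize (rem.erase (b', e)) := by
              rw [msSize_truncate]
              exact Nat.add_le_add_left
                (ih _ _ _ (valid_of_le (Multiset.erase_le _ _) hval)) _
          _ ≤ msSize rem := by
              conv_rhs => rw [hrem]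
              rw [msSize_cons]
              simp only
              omega

lemma msSize_mwaStep {a : Multiset (ℤ × ℤ)} (hval : ValidMS a) (ha : a ≠ 0) :
    msSize (mwaStep a).2 < msSize a := by
  set x := msMaxD (a.map Prod.snd) with hxd
  set b1 := msMaxD ((a.filter fun s => s.2 = x).map Prod.fst) with hb1d
  have hmapne : a.map Prod.snd ≠ 0 := by
    intro h
    exact ha (Multiset.map_eq_zero.1 h)
  have hxmem : x ∈ a.map Prod.snd := msMaxD_mem hmapne
  rcases Multiset.mem_map.1 hxmem with ⟨s0, hs0, hs0x⟩
  have hfilne : (a.filter fun s => s.2 = x) ≠ 0 := by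
    intro h
    have : s0 ∈ a.filter fun s => s.2 = x := Multiset.mem_filter.2 ⟨hs0, hs0x⟩
    rw [h] at this; simp at this
  have hmem : (b1, x) ∈ a := by
    have h1 : b1 ∈ (a.filter fun s => s.2 = x).map Prod.fst := by
      apply msMaxD_mem
      intro hz
      exact hfilne (Multiset.map_eq_zero.1 hz)
    rcases Multiset.mem_map.1 h1 with ⟨s, hs, hfst⟩
    rcases Multiset.mem_filter.1 hs with ⟨hs1, hs2⟩
    have : (b1, x) = s := by rw [← hfst, ← hs2]
    rw [this]; exact hs1
  have hbx : b1 ≤ x := hval _ hmem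
  have hrem : a = (b1, x) ::ₘ a.erase (b1, x) := (Multiset.cons_erase hmem).symm
  rw [mwaStep_eq]
  simp only [← hxd, ← hb1d]
  calc msSize (truncate (b1, x) + _) = msSize (truncate (b1, x)) + _ := msSize_add _ _
    _ ≤ (x - b1).toNat + msSize (a.erase (b1, x)) := by
        rw [msSize_truncate]
        exact Nat.add_le_add_left
          (msSize_chainAux _ _ _ _ (valid_of_le (Multiset.erase_le _ _) hval)) _
    _ < msSize a := by
        conv_rhs => rw [hrem]
        rw [msSize_cons]
        simp only
        omega

lemma mwaAux_zero (n : ℕ) : mwaAux n 0 = 0 := by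
  cases n <;> simp [mwaAux]

lemma msSize_eq_zero {a : Multiset (ℤ × ℤ)} (hval : ValidMS a) (h : msSize a = 0) : a = 0 := by
  by_contra ha
  obtain ⟨s, hs⟩ := Multiset.exists_mem_of_ne_zero ha
  have h1 : a = s ::ₘ a.erase s := (Multiset.cons_erase hs).symm
  rw [h1, msSize_cons] at h
  have := hval s hs
  omega

lemma mwaAux_congr : ∀ (n : ℕ), ∀ (m : ℕ) (a : Multiset (ℤ × ℤ)), ValidMS a →
    msSize a ≤ n → msSize a ≤ m → mwaAux n a = mwaAux m a := by
  intro n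
  induction n using Nat.strong_induction_on with
  | _ n ih =>
      intro m a hval hn hm
      by_cases ha : a = 0
      · subst ha; rw [mwaAux_zero, mwaAux_zero]
      · have hpos : 0 < msSize a := by
          rcases Nat.eq_zero_or_pos (msSize a) with h | h
          · exact absurd (msSize_eq_zero hval h) ha
          · exact h
        obtain ⟨n', rfl⟩ : ∃ n', n = n' + 1 := ⟨n - 1, by omega⟩
        obtain ⟨m', rfl⟩ : ∃ k, m = k + 1 := ⟨m - 1, by omega⟩
        show mwaAux (n' + 1) a = mwaAux (m' + 1) a
        simp only [mwaAux, if_neg ha]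
        congr 1
        have hlt := msSize_mwaStep hval ha
        exact ih n' (by omega) m' _ (valid_mwaStep a hval) (by omega) (by omega)

lemma MWA_zero : MWA 0 = 0 := by
  unfold MWA
  rw [mwaAux_zero]

lemma MWA_unfold {a : Multiset (ℤ × ℤ)} (hval : ValidMS a) (ha : a ≠ 0) :
    MWA a = (mwaStep a).1 ::ₘ MWA (mwaStep a).2 := by
  unfold MWA
  have hpos : 0 < msSize a := by
    rcases Nat.eq_zero_or_pos (msSize a) with h | h
    · exact absurd (msSize_eq_zero hval h) ha
    · exact h
  obtain ⟨k, hk⟩ : ∃ k, msSize a = k + 1 := ⟨msSize a - 1, by omega⟩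
  rw [hk]
  simp only [mwaAux, if_neg ha]
  congr 1
  have hlt := msSize_mwaStep hval ha
  exact mwaAux_congr k _ _ (valid_mwaStep a hval) (by omega) le_rfl
lemma add_ne_zero_l {a b : Multiset (ℤ × ℤ)} (h : a ≠ 0) : a + b ≠ 0 := by
  intro hh
  have := congrArg Multiset.card hh
  rw [Multiset.card_add] at this
  simp only [Multiset.card_zero] at this
  exact h (Multiset.card_eq_zero.1 (by omega))

lemma valid_ifrect (A B : ℤ) (t : ℕ) : ValidMS (if A ≤ B then rectN A B t else 0) := by
  split_ifs with h
  · exact valid_rectN h t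
  · exact valid_zero

lemma MWA_rect_step (A B : ℤ) (t : ℕ) (hAB : A ≤ B) :
    MWA (rectN A B (t + 1))
      = (B, B + (t : ℤ)) ::ₘ MWA (if A ≤ B - 1 then rectN A (B - 1) (t + 1) else 0) := by
  have hstep := step_rect A B t 0 hAB (by intro s hs; simp at hs)
    (by intro s hs; simp at hs) (by intro s hs; simp at hs)
  rw [add_zero, add_zero] at hstep
  rw [MWA_unfold (valid_rectN hAB _) (rectN_ne_zero _ _ _ (by omega)), hstep]

/-- The main additivity theorem, by strong induction. -/
lemma additive (n : ℕ) : ∀ (t1 t2 : ℕ) (A1 B1 A2 B2 : ℤ),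
    A1 ≤ B1 → A2 ≤ B2 → A1 ≤ A2 →
    (B1 - A1).toNat + (B2 - A2).toNat ≤ n →
    (B2 + (t2 : ℤ) ≤ B1 + (t1 : ℤ) ∨
      (B2 + (t2 : ℤ) = B1 + (t1 : ℤ) + 1 ∧ B1 - A1 < B2 - A2)) →
    MWA (rectN A1 B1 (t1 + 1) + rectN A2 B2 (t2 + 1))
      = MWA (rectN A1 B1 (t1 + 1)) + MWA (rectN A2 B2 (t2 + 1)) := by
  induction n using Nat.strong_induction_on with
  | _ n ih =>
  intro t1 t2 A1 B1 A2 B2 hAB1 hAB2 hA12 hmeas hclass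
  have hval1 : ValidMS (rectN A1 B1 (t1 + 1)) := valid_rectN hAB1 _
  have hval2 : ValidMS (rectN A2 B2 (t2 + 1)) := valid_rectN hAB2 _
  rcases hclass with hD | ⟨hDeq, hll⟩
  · -- D2 ≤ D1
    by_cases hcase : B1 - A1 ≤ B2 - A2 ∨ B2 + (t2 : ℤ) < B1 + (t1 : ℤ)
    · -- Case A1 : the step consumes m1 only
      have hstep := step_rect A1 B1 t1 (rectN A2 B2 (t2 + 1)) hAB1
        (by intro s hs; rcases mem_rectN.1 hs with ⟨j, hj, rfl⟩; simp only; omega)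
        (by intro s hs h; rcases mem_rectN.1 hs with ⟨j, hj, rfl⟩; simp only at h ⊢; omega)
        (by intro s hs h; rcases mem_rectN.1 hs with ⟨j, hj, rfl⟩; simp only at h ⊢; omega)
      rw [MWA_unfold (valid_add hval1 hval2)
        (add_ne_zero_l (rectN_ne_zero _ _ _ (by omega))), hstep]
      simp only
      rw [MWA_rect_step A1 B1 t1 hAB1, Multiset.cons_add]
      congr 1
      split_ifs with h
      · exact ih (n - 1) (by omega) t1 t2 A1 (B1 - 1) A2 B2 h hAB2 hA12 (by omega) (by omega)
      · rw [MWA_zero, zero_add, zero_add]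
    · push_neg at hcase
      obtain ⟨hl21, hDge⟩ := hcase
      have hDeq' : B2 + (t2 : ℤ) = B1 + (t1 : ℤ) := le_antisymm hD hDge
      by_cases hB : B2 ≤ B1
      · -- Case A2 : the step consumes m2 only
        have hstep := step_rect A2 B2 t2 (rectN A1 B1 (t1 + 1)) hAB2
          (by intro s hs; rcases mem_rectN.1 hs with ⟨j, hj, rfl⟩; simp only; omega)
          (by intro s hs h; rcases mem_rectN.1 hs with ⟨j, hj, rfl⟩; simp only at h ⊢; omega)
          (by intro s hs h; rcases mem_rectN.1 hs with ⟨j, hj, rfl⟩; simp only at h ⊢; omega)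
        rw [add_comm (rectN A1 B1 (t1 + 1)) (rectN A2 B2 (t2 + 1))]
        rw [MWA_unfold (valid_add hval2 hval1)
          (add_ne_zero_l (rectN_ne_zero _ _ _ (by omega))), hstep]
        simp only
        rw [MWA_rect_step A2 B2 t2 hAB2, Multiset.add_cons]
        congr 1
        split_ifs with h
        · rw [add_comm (rectN A2 (B2 - 1) (t2 + 1)) (rectN A1 B1 (t1 + 1))]
          exact ih (n - 1) (by omega) t1 t2 A1 B1 A2 (B2 - 1) hAB1 h hA12 (by omega) (by omega)
        · rw [MWA_zero, zero_add, add_zero]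
      · -- Case A3 : mixed chain, two steps
        push_neg at hB
        set u : ℕ := (B2 - B1 - 1).toNat with hu
        have hucast : (u : ℤ) = B2 - B1 - 1 := by omega
        have ht1 : t1 + 1 = (u + 1) + (t2 + 1) := by omega
        have hm1eq : rectN A1 B1 (t1 + 1) = rectN A1 B1 ((u + 1) + (t2 + 1)) := by rw [ht1]
        have hB2eq : B2 = B1 + (u : ℤ) + 1 := by omega
        have hm2eq : rectN A2 B2 (t2 + 1) = rectN A2 (B1 + (u : ℤ) + 1) (t2 + 1) := by
          rw [← hB2eq]
        rw [hm1eq, hm2eq]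
        have hstep1 := step_mixed A1 B1 A2 u t2 (by omega) (by omega) (by omega)
        rw [MWA_unfold
          (valid_add (valid_rectN hAB1 _) (valid_rectN (by omega) _))
          (add_ne_zero_l (rectN_ne_zero _ _ _ (by omega))), hstep1]
        simp only
        set low := rectN A1 (B1 - 1) (u + 1) with hlow
        set upper := rectN (A1 + (u : ℤ) + 1) (B1 + (u : ℤ) + 1) (t2 + 1) with hupper
        set if2 := if A2 ≤ B1 + (u : ℤ) then rectN A2 (B1 + (u : ℤ)) (t2 + 1) else 0 with hif2
        have hre : if2 + (low + upper) = upper + (if2 + low) := by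
          rw [add_comm low upper, ← add_assoc, add_comm if2 upper, add_assoc]
        rw [hre]
        have hvif2 : ValidMS if2 := valid_ifrect _ _ _
        have hstep2 := step_rect (A1 + (u : ℤ) + 1) (B1 + (u : ℤ) + 1) t2 (if2 + low)
          (by omega)
          (by rw [hif2]
              intro s hs
              rcases Multiset.mem_add.1 hs with h | h
              · split_ifs at h with hcnd
                · rcases mem_rectN.1 h with ⟨j, hj, rfl⟩; simp only; omega
                · simp at h
              · rw [hlow] at h
                rcases mem_rectN.1 h with ⟨j, hj, rfl⟩; simp only; omega)
          (by rw [hif2]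
              intro s hs hse
              rcases Multiset.mem_add.1 hs with h | h
              · split_ifs at h with hcnd
                · rcases mem_rectN.1 h with ⟨j, hj, rfl⟩; simp only at hse ⊢; omega
                · simp at h
              · rw [hlow] at h
                rcases mem_rectN.1 h with ⟨j, hj, rfl⟩; simp only at hse ⊢; omega)
          (by rw [hif2]
              intro s hs hse
              rcases Multiset.mem_add.1 hs with h | h
              · split_ifs at h with hcnd
                · rcases mem_rectN.1 h with ⟨j, hj, rfl⟩; simp only at hse ⊢; omega
                · simp at h
              · rw [hlow] at h
                rcases mem_rectN.1 h with ⟨j, hj, rfl⟩; simp only at hse ⊢; omega)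
        rw [MWA_unfold
          (valid_add (valid_rectN (by omega) _) (valid_add hvif2 (valid_rectN (by omega) _)))
          (add_ne_zero_l (rectN_ne_zero _ _ _ (by omega))), hstep2]
        simp only
        rw [if_pos (show A1 + (u : ℤ) + 1 ≤ B1 + (u : ℤ) + 1 - 1 by omega)]
        have he1 : B1 + (u : ℤ) + 1 - 1 = B1 + (u : ℤ) := by ring
        rw [he1]
        -- reassemble the new state as m1⁻ + if2
        have hsplit2 : rectN A1 (B1 - 1) ((u + 1) + (t2 + 1))
            = low + rectN (A1 + (u : ℤ) + 1) (B1 + (u : ℤ)) (t2 + 1) := by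
          rw [rectN_split, hlow]
          have e1 : A1 + ((u + 1 : ℕ) : ℤ) = A1 + (u : ℤ) + 1 := by push_cast; ring
          have e2 : (B1 - 1) + ((u + 1 : ℕ) : ℤ) = B1 + (u : ℤ) := by push_cast; ring
          rw [e1, e2]
        have hre2 : rectN (A1 + (u : ℤ) + 1) (B1 + (u : ℤ)) (t2 + 1) + (if2 + low)
            = rectN A1 (B1 - 1) ((u + 1) + (t2 + 1)) + if2 := by
          rw [hsplit2]
          rw [add_comm if2 low, ← add_assoc, add_comm _ low, add_assoc]
        rw [hre2]
        -- right-hand side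
        have hrs1 : ((u + 1) + (t2 + 1)) = (u + t2 + 1) + 1 := by omega
        rw [hrs1]
        rw [MWA_rect_step A1 B1 (u + t2 + 1) hAB1]
        rw [MWA_rect_step A2 (B1 + (u : ℤ) + 1) t2 (by omega)]
        rw [if_pos (show A1 ≤ B1 - 1 by omega)]
        rw [he1]
        rw [Multiset.cons_add, Multiset.add_cons]
        have hg1 : B1 + ((u + t2 + 1 : ℕ) : ℤ) = B1 + (u : ℤ) + 1 + (t2 : ℤ) := by
          push_cast; ring
        rw [hg1]
        congr 2
        rw [hif2]
        split_ifs with h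
        · exact ih (n - 1) (by omega) (u + t2 + 1) t2 A1 (B1 - 1) A2 (B1 + (u : ℤ))
            (by omega) h hA12 (by omega) (by omega)
        · rw [MWA_zero, add_zero, add_zero]
  · -- Case B : D2 = D1 + 1, ℓ1 < ℓ2 ; the step consumes m2 only
    have hstep := step_rect A2 B2 t2 (rectN A1 B1 (t1 + 1)) hAB2
      (by intro s hs; rcases mem_rectN.1 hs with ⟨j, hj, rfl⟩; simp only; omega)
      (by intro s hs h; rcases mem_rectN.1 hs with ⟨j, hj, rfl⟩; simp only at h ⊢; omega)
      (by intro s hs h; rcases mem_rectN.1 hs with ⟨j, hj, rfl⟩; simp only at h ⊢; omega)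
    rw [add_comm (rectN A1 B1 (t1 + 1)) (rectN A2 B2 (t2 + 1))]
    rw [MWA_unfold (valid_add hval2 hval1)
      (add_ne_zero_l (rectN_ne_zero _ _ _ (by omega))), hstep]
    simp only
    rw [MWA_rect_step A2 B2 t2 hAB2, Multiset.add_cons]
    congr 1
    rw [if_pos (show A2 ≤ B2 - 1 by omega)]
    rw [add_comm (rectN A2 (B2 - 1) (t2 + 1)) (rectN A1 B1 (t1 + 1))]
    exact ih (n - 1) (by omega) t1 t2 A1 B1 A2 (B2 - 1) hAB1 (by omega) hA12
      (by omega) (by omega)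
end MWAProof

theorem mwa_additive_of_contained_support
    (A1 B1 C1 D1 A2 B2 C2 D2 : ℤ)
    (h1 : SpehQuad A1 B1 C1 D1) (h2 : SpehQuad A2 B2 C2 D2)
    (hA : A1 ≤ A2) (hD : D2 ≤ D1) :
    MWA (rectMulti A1 B1 C1 + rectMulti A2 B2 C2) =
      MWA (rectMulti A1 B1 C1) + MWA (rectMulti A2 B2 C2) := by
  obtain ⟨hab1, hac1, hd1⟩ := h1
  obtain ⟨hab2, hac2, hd2⟩ := h2
  rw [MWAProof.rectMulti_eq A1 B1 C1, MWAProof.rectMulti_eq A2 B2 C2]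
  have e1 : (C1 - A1 + 1).toNat = (C1 - A1).toNat + 1 := by omega
  have e2 : (C2 - A2 + 1).toNat = (C2 - A2).toNat + 1 := by omega
  rw [e1, e2]
  exact MWAProof.additive ((B1 - A1).toNat + (B2 - A2).toNat) (C1 - A1).toNat (C2 - A2).toNat
    A1 B1 A2 B2 hab1 hab2 hA le_rfl (Or.inl (by omega))
end

section
/- The relation ≤ on multisegments (c ≤ b iff c = b or c < b in the linking order) is a partial order; in particular, for multisegments b and c, if c ≤ b and b ≤ c then b = c, and there is no multisegment b with b < b. -/
/-- Sum of squared lengths: a strictly increasing measure along `Prec`. -/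
def muSq (a : Multiset (ℤ × ℤ)) : ℤ := (a.map fun s => (s.2 + 1 - s.1) ^ 2).sum

lemma prec_muSq {c b : Multiset (ℤ × ℤ)} (h : Prec c b) : muSq b < muSq c := by
  obtain ⟨s, t, rest, hb, ⟨⟨x, y, hxy, hU⟩, hne1, hne2⟩, hc⟩ := h
  simp only [segSet] at hU hne1 hne2
  -- nonemptiness of both segments
  have hs : s.1 ≤ s.2 := by
    by_contra h
    exact hne2 (by rw [Finset.Icc_eq_empty h, Finset.empty_union])
  have ht : t.1 ≤ t.2 := by
    by_contra h
    exact hne1 (by rw [Finset.Icc_eq_empty h, Finset.union_empty])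
  have hmem : ∀ z : ℤ, ((s.1 ≤ z ∧ z ≤ s.2) ∨ (t.1 ≤ z ∧ z ≤ t.2)) ↔ (x ≤ z ∧ z ≤ y) := by
    intro z
    have := Finset.ext_iff.mp hU z
    simpa [Finset.mem_union, Finset.mem_Icc] using this
  have h1 := hmem s.1
  have h2 := hmem t.1
  have h3 := hmem s.2
  have h4 := hmem t.2
  have h5 := hmem x
  have h6 := hmem y
  have hne1' : ¬(x = s.1 ∧ y = s.2) := by
    rintro ⟨rfl, rfl⟩
    exact hne1 (by rw [hU])
  have hne2' : ¬(x = t.1 ∧ y = t.2) := by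
    rintro ⟨rfl, rfl⟩
    exact hne2 (by rw [hU])
  -- basic inequalities
  have hx1 : x ≤ s.1 := ((h1.mp (Or.inl ⟨le_refl _, hs⟩)).1)
  have hx2 : x ≤ t.1 := ((h2.mp (Or.inr ⟨le_refl _, ht⟩)).1)
  have hy1 : s.2 ≤ y := ((h3.mp (Or.inl ⟨hs, le_refl _⟩)).2)
  have hy2 : t.2 ≤ y := ((h4.mp (Or.inr ⟨ht, le_refl _⟩)).2)
  have hxm : s.1 ≤ x ∨ t.1 ≤ x := by
    rcases h5.mpr ⟨le_refl _, hxy⟩ with h | h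
    · exact Or.inl h.1
    · exact Or.inr h.1
  have hym : y ≤ s.2 ∨ y ≤ t.2 := by
    rcases h6.mpr ⟨hxy, le_refl _⟩ with h | h
    · exact Or.inl h.2
    · exact Or.inr h.2
  -- strictness of lengths
  have hA1 : s.2 + 1 - s.1 < y + 1 - x := by omega
  have hA2 : t.2 + 1 - t.1 < y + 1 - x := by omega
  -- no gap
  have hgap : max s.1 t.1 ≤ min s.2 t.2 + 1 := by
    by_contra hg
    have h7 := hmem (max s.1 t.1 - 1)
    omega
  have hxv : x = min s.1 t.1 := by omega
  have hyv : y = max s.2 t.2 := by omega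
  have hmub : muSq b = (s.2 + 1 - s.1) ^ 2 + ((t.2 + 1 - t.1) ^ 2 + muSq rest) := by
    rw [hb]; simp [muSq]
  by_cases hcase : max s.1 t.1 ≤ min s.2 t.2
  · have hmuc : muSq c =
        (max s.2 t.2 + 1 - min s.1 t.1) ^ 2 +
          ((min s.2 t.2 + 1 - max s.1 t.1) ^ 2 + muSq rest) := by
      rw [hc]; simp [muSq, segInterM, hcase]
    rw [hmub, hmuc]
    have hsum : (max s.2 t.2 + 1 - min s.1 t.1) + (min s.2 t.2 + 1 - max s.1 t.1)
        = (s.2 + 1 - s.1) + (t.2 + 1 - t.1) := by omega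
    have hA1' : s.2 + 1 - s.1 < max s.2 t.2 + 1 - min s.1 t.1 := by omega
    have hA2' : t.2 + 1 - t.1 < max s.2 t.2 + 1 - min s.1 t.1 := by omega
    nlinarith [mul_pos (sub_pos.2 hA1') (sub_pos.2 hA2')]
  · have heq : max s.1 t.1 = min s.2 t.2 + 1 := by omega
    have hmuc : muSq c = (max s.2 t.2 + 1 - min s.1 t.1) ^ 2 + muSq rest := by
      rw [hc]; simp [muSq, segInterM, hcase]
    rw [hmub, hmuc]
    have hsum : (max s.2 t.2 + 1 - min s.1 t.1)
        = (s.2 + 1 - s.1) + (t.2 + 1 - t.1) := by omega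
    have hp : 0 < s.2 + 1 - s.1 := by omega
    have hq : 0 < t.2 + 1 - t.1 := by omega
    nlinarith [mul_pos hp hq]

lemma mlt_muSq {c b : Multiset (ℤ × ℤ)} (h : MLt c b) : muSq b < muSq c := by
  induction h with
  | single h => exact prec_muSq h
  | tail _ h2 ih => exact lt_trans (prec_muSq h2) ih

theorem linking_order_is_partial_order :
    (∀ b c : Multiset (ℤ × ℤ), ValidMS b → ValidMS c →
      (c = b ∨ MLt c b) → (b = c ∨ MLt b c) → b = c) ∧
    (∀ b : Multiset (ℤ × ℤ), ValidMS b → ¬ MLt b b) := by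
  constructor
  · rintro b c _ _ (h1 | h1) (h2 | h2)
    · exact h1.symm
    · exact h1.symm
    · exact h2
    · exact absurd (mlt_muSq h2) (not_lt.2 (le_of_lt (mlt_muSq h1)))
  · intro b _ h
    exact lt_irrefl _ (mlt_muSq h)
end
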